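/- arXiv:1210.4088 — 2 statements merged into one kernel-verified Lean document; each statement's English description precedes it below -/
import Mathlib

section
/- For b > 0 define X₂(ξ, b) = ξ² − b² X₃( (2ξ + √(4ξ² + b²)) / b ), where X₃(z) = (1/8) ln² z + (1/16)(z² − z⁻²) ln z − (1/32)(z² + z⁻²). Then for every ξ ∈ ℝ the partial derivative of X₂ with respect to ξ equals (∂X₂/∂ξ)(ξ, b) = 2ξ − √(4ξ² + b²) · ln( (2ξ + √(4ξ² + b²)) / b ). -/
set_option maxHeartbeats 2000000 in
/-- For `b > 0` and `X₂(ξ, b) = ξ² − b² X₃((2ξ + √(4ξ² + b²))/b)`, the partial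
derivative of `X₂` in `ξ` is `2ξ − √(4ξ² + b²) ln((2ξ + √(4ξ² + b²))/b)`. -/
theorem X2_deriv
    (b : ℝ) (hb : 0 < b) (X₃ : ℝ → ℝ) (X₂ : ℝ → ℝ)
    (hX₃ : ∀ z : ℝ, X₃ z =
      (1/8) * (Real.log z) ^ 2 + (1/16) * (z ^ 2 - (z ^ 2)⁻¹) * Real.log z -
      (1/32) * (z ^ 2 + (z ^ 2)⁻¹))
    (hX₂ : ∀ ξ : ℝ, X₂ ξ =
      ξ ^ 2 - b ^ 2 * X₃ ((2 * ξ + Real.sqrt (4 * ξ ^ 2 + b ^ 2)) / b)) :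
    ∀ ξ : ℝ, HasDerivAt X₂
      (2 * ξ - Real.sqrt (4 * ξ ^ 2 + b ^ 2) *
        Real.log ((2 * ξ + Real.sqrt (4 * ξ ^ 2 + b ^ 2)) / b)) ξ := by
  intro ξ
  have hX₂' : X₂ = fun x : ℝ =>
      x ^ 2 - b ^ 2 * ((1/8) * (Real.log ((2 * x + Real.sqrt (4 * x ^ 2 + b ^ 2)) / b)) ^ 2
        + (1/16) * (((2 * x + Real.sqrt (4 * x ^ 2 + b ^ 2)) / b) ^ 2
            - (((2 * x + Real.sqrt (4 * x ^ 2 + b ^ 2)) / b) ^ 2)⁻¹)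
          * Real.log ((2 * x + Real.sqrt (4 * x ^ 2 + b ^ 2)) / b)
        - (1/32) * (((2 * x + Real.sqrt (4 * x ^ 2 + b ^ 2)) / b) ^ 2
            + (((2 * x + Real.sqrt (4 * x ^ 2 + b ^ 2)) / b) ^ 2)⁻¹)) := by
    funext x; rw [hX₂, hX₃]
  rw [hX₂']
  set s : ℝ := Real.sqrt (4 * ξ ^ 2 + b ^ 2) with hs_def
  have hin : (0:ℝ) < 4 * ξ ^ 2 + b ^ 2 := by positivity
  have hs : 0 < s := Real.sqrt_pos.mpr hin
  have hsq : s ^ 2 = 4 * ξ ^ 2 + b ^ 2 := Real.sq_sqrt hin.le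
  have h2ξs : 0 < 2 * ξ + s := by nlinarith [abs_nonneg ξ, sq_abs ξ, abs_le_abs (le_refl ξ)]
  have hz : (0:ℝ) < (2 * ξ + s) / b := div_pos h2ξs hb
  have hzne : (2 * ξ + s) / b ≠ 0 := hz.ne'
  -- derivative of inner 4x^2+b^2
  have h1 : HasDerivAt (fun x : ℝ => 4 * x ^ 2 + b ^ 2) (8 * ξ) ξ := by
    have := ((hasDerivAt_pow 2 ξ).const_mul 4).add_const (b ^ 2)
    simpa [mul_comm, mul_assoc, mul_left_comm] using this.congr_deriv (by ring)
  -- derivative of s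
  have hS : HasDerivAt (fun x : ℝ => Real.sqrt (4 * x ^ 2 + b ^ 2)) (8 * ξ / (2 * s)) ξ := by
    have h2 := (Real.hasDerivAt_sqrt (ne_of_gt hin)).comp ξ h1
    simpa [Function.comp_def, hs_def, div_eq_mul_inv, mul_comm, mul_assoc, mul_left_comm] using h2
  -- derivative of z
  have hZ : HasDerivAt (fun x : ℝ => (2 * x + Real.sqrt (4 * x ^ 2 + b ^ 2)) / b)
      ((2 + 8 * ξ / (2 * s)) / b) ξ := by
    have h3 : HasDerivAt (fun x : ℝ => 2 * x) (2 : ℝ) ξ := by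
      simpa using (hasDerivAt_id ξ).const_mul 2
    exact (h3.add hS).div_const b
  set z' : ℝ := (2 + 8 * ξ / (2 * s)) / b with hz'_def
  set zv : ℝ := (2 * ξ + s) / b with hzv_def
  have hL : HasDerivAt (fun x : ℝ => Real.log ((2 * x + Real.sqrt (4 * x ^ 2 + b ^ 2)) / b))
      (zv⁻¹ * z') ξ := by
    have := (Real.hasDerivAt_log hzne).comp ξ hZ
    simpa [Function.comp_def, hzv_def, hz'_def, div_eq_mul_inv, mul_comm] using this
  have hLsq : HasDerivAt (fun x : ℝ => (Real.log ((2 * x + Real.sqrt (4 * x ^ 2 + b ^ 2)) / b)) ^ 2)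
      (2 * Real.log zv * (zv⁻¹ * z')) ξ := by
    simpa using hL.fun_pow 2
  have hZsq : HasDerivAt (fun x : ℝ => ((2 * x + Real.sqrt (4 * x ^ 2 + b ^ 2)) / b) ^ 2)
      (2 * zv * z') ξ := by
    simpa [hzv_def] using hZ.fun_pow 2
  have hZsqinv : HasDerivAt (fun x : ℝ => (((2 * x + Real.sqrt (4 * x ^ 2 + b ^ 2)) / b) ^ 2)⁻¹)
      (-(2 * zv * z') / (zv ^ 2) ^ 2) ξ := hZsq.inv (pow_ne_zero 2 hzne)
  have hD := (hasDerivAt_pow 2 ξ).fun_sub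
    ((((hLsq.const_mul (1/8:ℝ)).fun_add
        (((hZsq.fun_sub hZsqinv).const_mul (1/16:ℝ)).fun_mul hL)).fun_sub
      ((hZsq.fun_add hZsqinv).const_mul (1/32:ℝ))).const_mul (b^2))
  convert hD using 1
  · rfl
  · rfl
  have hinv : zv⁻¹ = (s - 2 * ξ) / b := by
    rw [hzv_def, inv_div, div_eq_div_iff (ne_of_gt h2ξs) hb.ne']
    nlinarith [hsq]
  rw [← hs_def, ← hzv_def]
  have hB : z' = 2 * zv / s := by
    rw [hz'_def, hzv_def]
    field_simp
    ring
  have hA : zv⁻¹ * z' = 2 / s := by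
    rw [hB]
    field_simp [hzne]
  have hD1 : 2 * zv * z' = 4 * zv ^ 2 / s := by rw [hB]; ring
  have hD2 : -(4 * zv ^ 2 / s) / (zv ^ 2) ^ 2 = -(4 / s * ((s - 2 * ξ) / b) ^ 2) := by
    rw [← hinv]
    field_simp [hzne]
  have hvv : (zv ^ 2)⁻¹ = ((s - 2 * ξ) / b) ^ 2 := by rw [← inv_pow, hinv]
  rw [hA, hD1, hD2, hvv, hzv_def]
  have hb2 : b ^ 2 = s ^ 2 - 4 * ξ ^ 2 := by linarith
  set L := Real.log ((2 * ξ + s) / b) with hL_def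
  norm_num
  field_simp
  linear_combination (2048 * L) * hsq
end

section
/- For fixed b > 0, the function X₂(ξ, b) = ξ² − b² X₃( (2ξ + √(4ξ² + b²)) / b ), with X₃(z) = (1/8) ln² z + (1/16)(z² − z⁻²) ln z − (1/32)(z² + z⁻²), satisfies the asymptotics X₂(ξ, b) = ξ² (3/2 − 2 ln 2 + ln b − ln ξ) + O(ln² ξ) as ξ → +∞. -/
open Filter Asymptotics

set_option maxHeartbeats 1000000 in

/-- Asymptotics of `X₂(ξ, b)` as `ξ → +∞`:
`X₂(ξ, b) = ξ²(3/2 − 2 ln 2 + ln b − ln ξ) + O(ln² ξ)`. -/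
theorem X2_asymptotics_at_infinity
    (b : ℝ) (hb : 0 < b) (X₃ : ℝ → ℝ) (X₂ : ℝ → ℝ)
    (hX₃ : ∀ z : ℝ, X₃ z =
      (1/8) * (Real.log z) ^ 2 + (1/16) * (z ^ 2 - (z ^ 2)⁻¹) * Real.log z -
      (1/32) * (z ^ 2 + (z ^ 2)⁻¹))
    (hX₂ : ∀ ξ : ℝ, X₂ ξ =
      ξ ^ 2 - b ^ 2 * X₃ ((2 * ξ + Real.sqrt (4 * ξ ^ 2 + b ^ 2)) / b)) :
    (fun ξ : ℝ => X₂ ξ -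
        ξ ^ 2 * (3/2 - 2 * Real.log 2 + Real.log b - Real.log ξ))
      =O[atTop] (fun ξ : ℝ => (Real.log ξ) ^ 2) := by
  have hlog2 : (0:ℝ) < Real.log 2 := Real.log_pos (by norm_num)
  set M : ℝ := 1 + (Real.log 4 + |Real.log b| + b ^ 2 / 16) / Real.log 2 with hM
  have hM1 : 1 ≤ M := by
    have h4 : (0:ℝ) ≤ Real.log 4 := Real.log_nonneg (by norm_num)
    have : 0 ≤ (Real.log 4 + |Real.log b| + b ^ 2 / 16) / Real.log 2 := by
      apply div_nonneg _ hlog2.le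
      positivity
    rw [hM]; linarith
  rw [isBigO_iff]
  refine ⟨(b ^ 2 / 8) * (M / Real.log 2 + M ^ 2 + 1 / (Real.log 2) ^ 2), ?_⟩
  filter_upwards [eventually_ge_atTop (2:ℝ), eventually_ge_atTop b] with ξ hξ2 hξb
  have hξ0 : (0:ℝ) < ξ := by linarith
  set s : ℝ := Real.sqrt (4 * ξ ^ 2 + b ^ 2) with hs
  have hs0 : 0 ≤ s := Real.sqrt_nonneg _
  have hss : s ^ 2 = 4 * ξ ^ 2 + b ^ 2 := Real.sq_sqrt (by positivity)
  have hs_lb : 2 * ξ ≤ s := by nlinarith [sq_nonneg (s - 2 * ξ), sq_nonneg (s + 2 * ξ)]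
  have hs_ub : s ≤ 2 * ξ + b ^ 2 / (4 * ξ) := by
    have h1 : 4 * ξ ^ 2 + b ^ 2 ≤ (2 * ξ + b ^ 2 / (4 * ξ)) ^ 2 := by
      have : (2 * ξ + b ^ 2 / (4 * ξ)) ^ 2 = 4 * ξ ^ 2 + b ^ 2 + (b ^ 2 / (4 * ξ)) ^ 2 := by
        field_simp; ring
      nlinarith [sq_nonneg (b ^ 2 / (4 * ξ))]
    calc s ≤ Real.sqrt ((2 * ξ + b ^ 2 / (4 * ξ)) ^ 2) := Real.sqrt_le_sqrt h1
    _ = 2 * ξ + b ^ 2 / (4 * ξ) := Real.sqrt_sq (by positivity)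
  set z : ℝ := (2 * ξ + s) / b with hzdef
  have hzs0 : 0 < 2 * ξ + s := by linarith
  have hz4 : 4 ≤ z := by
    rw [hzdef, le_div_iff₀ hb]
    nlinarith
  have hz1 : 1 < z := by linarith
  have hz0 : 0 < z := by linarith
  have hzb : (2 * ξ + s) * (s - 2 * ξ) = b ^ 2 := by nlinarith
  have hzinv : z⁻¹ = (s - 2 * ξ) / b := by
    have hm : z * ((s - 2 * ξ) / b) = 1 := by
      rw [hzdef]
      field_simp
      nlinarith
    exact inv_eq_of_mul_eq_one_right hm
  have hbne : b ≠ 0 := hb.ne'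
  have hA : z ^ 2 - (z ^ 2)⁻¹ = 8 * ξ * s / b ^ 2 := by
    rw [← inv_pow, hzinv, hzdef]
    field_simp
    ring_nf
  have hB : z ^ 2 + (z ^ 2)⁻¹ = 16 * ξ ^ 2 / b ^ 2 + 2 := by
    rw [← inv_pow, hzinv, hzdef]
    field_simp
    linear_combination (2 - 2 * b ^ 2 + 2 * b ^ 2) * hss
  set lz : ℝ := Real.log z with hlzdef
  have hX2' : X₂ ξ = 3/2 * ξ ^ 2 + b ^ 2 / 16 - (ξ * s / 2) * lz - (b ^ 2 / 8) * lz ^ 2 := by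
    have hbne : b ^ 2 ≠ 0 := by positivity
    have d1 : b ^ 2 * (8 * ξ * s / b ^ 2) = 8 * ξ * s := by field_simp
    have d2 : b ^ 2 * (16 * ξ ^ 2 / b ^ 2) = 16 * ξ ^ 2 := by field_simp
    rw [hX₂, ← hs, ← hzdef, hX₃, hA, hB]
    linear_combination (-(1/16) * lz) * d1 + (1/32) * d2
  -- log decomposition
  set l : ℝ := Real.log ξ with hldef
  set u : ℝ := (2 * ξ + s) / (4 * ξ) with hudef
  set ε : ℝ := Real.log u with hεdef
  have hu1 : 1 ≤ u := by
    rw [hudef, le_div_iff₀ (by positivity)]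
    linarith
  have huub : u ≤ 1 + b ^ 2 / (16 * ξ ^ 2) := by
    rw [hudef, div_le_iff₀ (by positivity)]
    have key : (1 + b ^ 2 / (16 * ξ ^ 2)) * (4 * ξ) = 4 * ξ + b ^ 2 / (4 * ξ) := by
      field_simp; ring
    rw [key]
    linarith [hs_ub]
  have hε0 : 0 ≤ ε := Real.log_nonneg hu1
  have hεub : ε ≤ b ^ 2 / (16 * ξ ^ 2) := by
    have := Real.log_le_sub_one_of_pos (by linarith : (0:ℝ) < u)
    rw [← hεdef] at this
    linarith
  have hzmul : z = 4 * ξ / b * u := by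
    rw [hzdef, hudef]; field_simp
  have hlz : lz = Real.log 4 + l - Real.log b + ε := by
    rw [hlzdef, hzmul, Real.log_mul (by positivity) (by positivity),
      Real.log_div (by positivity) (by positivity),
      Real.log_mul (by norm_num) (by positivity)]
  have hlog4 : Real.log 4 = 2 * Real.log 2 := by
    rw [show (4:ℝ) = 2 ^ 2 by norm_num, Real.log_pow]
    push_cast; ring
  have hl2 : Real.log 2 ≤ l := Real.log_le_log (by norm_num) hξ2
  have hl0 : 0 < l := lt_of_lt_of_le hlog2 hl2
  have hlz0 : 0 < lz := Real.log_pos hz1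
  -- bound lz ≤ M * l
  have hεub' : ε ≤ b ^ 2 / 16 := by
    have h1 : b ^ 2 / (16 * ξ ^ 2) ≤ b ^ 2 / 16 := by
      rw [div_le_div_iff₀ (by positivity) (by norm_num)]
      have key : 0 ≤ b ^ 2 * (ξ ^ 2 - 1) := mul_nonneg (sq_nonneg b) (by nlinarith)
      linarith [key]
    linarith
  have hlzub : lz ≤ M * l := by
    have h1 : lz ≤ Real.log 4 + |Real.log b| + b ^ 2 / 16 + l := by
      have : -Real.log b ≤ |Real.log b| := neg_le_abs _
      linarith [hlz, hεub']
    have h2 : Real.log 4 + |Real.log b| + b ^ 2 / 16 ≤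
        (Real.log 4 + |Real.log b| + b ^ 2 / 16) / Real.log 2 * l := by
      rw [div_mul_eq_mul_div, le_div_iff₀ hlog2]
      have hc : 0 ≤ Real.log 4 + |Real.log b| + b ^ 2 / 16 := by
        have h4 : (0:ℝ) ≤ Real.log 4 := Real.log_nonneg (by norm_num)
        positivity
      nlinarith
    rw [hM]
    nlinarith
  clear_value ε u l lz z s
  clear_value M
  clear hX₂ hX₃ hzdef hs hudef hlzdef hεdef
  -- error identity
  have hE : X₂ ξ - ξ ^ 2 * (3/2 - 2 * Real.log 2 + Real.log b - l) =
      lz * (ξ ^ 2 - ξ * s / 2) - ξ ^ 2 * ε - (b ^ 2 / 8) * lz ^ 2 + b ^ 2 / 16 := by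
    rw [hX2']
    linear_combination (-(ξ ^ 2)) * hlz - ξ ^ 2 * hlog4
  -- bounds on each term
  have hb1 : |lz * (ξ ^ 2 - ξ * s / 2)| ≤ lz * (b ^ 2 / 8) := by
    rw [abs_mul, abs_of_pos hlz0]
    apply mul_le_mul_of_nonneg_left _ hlz0.le
    rw [abs_le]
    constructor
    · have : ξ * s ≤ ξ * (2 * ξ + b ^ 2 / (4 * ξ)) := by
        apply mul_le_mul_of_nonneg_left hs_ub hξ0.le
      have h2 : ξ * (b ^ 2 / (4 * ξ)) = b ^ 2 / 4 := by field_simp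
      nlinarith
    · nlinarith
  have hb2 : |ξ ^ 2 * ε| ≤ b ^ 2 / 16 := by
    rw [abs_of_nonneg (by positivity)]
    have : ξ ^ 2 * ε ≤ ξ ^ 2 * (b ^ 2 / (16 * ξ ^ 2)) := by
      exact mul_le_mul_of_nonneg_left hεub (sq_nonneg ξ)
    have h2 : ξ ^ 2 * (b ^ 2 / (16 * ξ ^ 2)) = b ^ 2 / 16 := by field_simp
    linarith
  have hb3 : (b ^ 2 / 8) * lz ^ 2 ≤ (b ^ 2 / 8) * (M ^ 2 * l ^ 2) := by
    apply mul_le_mul_of_nonneg_left _ (by positivity)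
    calc lz ^ 2 ≤ (M * l) ^ 2 := pow_le_pow_left₀ hlz0.le hlzub 2
      _ = M ^ 2 * l ^ 2 := by ring
  -- assemble
  have hnorm : ‖l ^ 2‖ = l ^ 2 := by
    rw [Real.norm_eq_abs, abs_of_nonneg (by positivity)]
  rw [Real.norm_eq_abs, hnorm, hE]
  have hlsq1 : l ≤ l ^ 2 / Real.log 2 := by
    rw [le_div_iff₀ hlog2]
    calc l * Real.log 2 ≤ l * l := mul_le_mul_of_nonneg_left hl2 hl0.le
      _ = l ^ 2 := by ring
  have hlsq2 : (1:ℝ) ≤ l ^ 2 / (Real.log 2) ^ 2 := by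
    rw [le_div_iff₀ (by positivity)]
    calc 1 * Real.log 2 ^ 2 = Real.log 2 * Real.log 2 := by ring
      _ ≤ l * l := mul_le_mul hl2 hl2 hlog2.le hl0.le
      _ = l ^ 2 := by ring
  have habs : |lz * (ξ ^ 2 - ξ * s / 2) - ξ ^ 2 * ε - (b ^ 2 / 8) * lz ^ 2 + b ^ 2 / 16| ≤
      lz * (b ^ 2 / 8) + b ^ 2 / 16 + (b ^ 2 / 8) * lz ^ 2 + b ^ 2 / 16 := by
    have h3 : |(b ^ 2 / 8) * lz ^ 2| = (b ^ 2 / 8) * lz ^ 2 := abs_of_nonneg (by positivity)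
    calc |lz * (ξ ^ 2 - ξ * s / 2) - ξ ^ 2 * ε - (b ^ 2 / 8) * lz ^ 2 + b ^ 2 / 16|
        ≤ |lz * (ξ ^ 2 - ξ * s / 2)| + |ξ ^ 2 * ε| + |(b ^ 2 / 8) * lz ^ 2| + |b ^ 2 / 16| := by
          have := abs_add_le (lz * (ξ ^ 2 - ξ * s / 2) - ξ ^ 2 * ε - (b ^ 2 / 8) * lz ^ 2) (b ^ 2 / 16)
          have h2 := abs_sub (lz * (ξ ^ 2 - ξ * s / 2) - ξ ^ 2 * ε) ((b ^ 2 / 8) * lz ^ 2)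
          have h1 := abs_sub (lz * (ξ ^ 2 - ξ * s / 2)) (ξ ^ 2 * ε)
          linarith
      _ ≤ lz * (b ^ 2 / 8) + b ^ 2 / 16 + (b ^ 2 / 8) * lz ^ 2 + b ^ 2 / 16 := by
          rw [h3, abs_of_nonneg (by positivity : (0:ℝ) ≤ b ^ 2 / 16)]
          linarith
  have hfinal : lz * (b ^ 2 / 8) + b ^ 2 / 16 + (b ^ 2 / 8) * lz ^ 2 + b ^ 2 / 16 ≤
      (b ^ 2 / 8) * (M / Real.log 2 + M ^ 2 + 1 / (Real.log 2) ^ 2) * l ^ 2 := by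
    have t1 : lz * (b ^ 2 / 8) ≤ (b ^ 2 / 8) * (M / Real.log 2) * l ^ 2 := by
      have hML : lz ≤ M * (l ^ 2 / Real.log 2) := by
        calc lz ≤ M * l := hlzub
        _ ≤ M * (l ^ 2 / Real.log 2) := by
            apply mul_le_mul_of_nonneg_left hlsq1 (by linarith)
      calc lz * (b ^ 2 / 8) ≤ M * (l ^ 2 / Real.log 2) * (b ^ 2 / 8) := by
            apply mul_le_mul_of_nonneg_right hML (by positivity)
        _ = (b ^ 2 / 8) * (M / Real.log 2) * l ^ 2 := by ring
    have t2 : (b ^ 2 / 8) * lz ^ 2 ≤ (b ^ 2 / 8) * M ^ 2 * l ^ 2 := by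
      calc (b ^ 2 / 8) * lz ^ 2 ≤ (b ^ 2 / 8) * (M ^ 2 * l ^ 2) := hb3
        _ = (b ^ 2 / 8) * M ^ 2 * l ^ 2 := by ring
    have t3 : b ^ 2 / 16 + b ^ 2 / 16 ≤ (b ^ 2 / 8) * (1 / (Real.log 2) ^ 2) * l ^ 2 := by
      have : (b ^ 2 / 8) * 1 ≤ (b ^ 2 / 8) * (l ^ 2 / (Real.log 2) ^ 2) := by
        apply mul_le_mul_of_nonneg_left hlsq2 (by positivity)
      calc b ^ 2 / 16 + b ^ 2 / 16 = (b ^ 2 / 8) * 1 := by ring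
        _ ≤ (b ^ 2 / 8) * (l ^ 2 / (Real.log 2) ^ 2) := this
        _ = (b ^ 2 / 8) * (1 / (Real.log 2) ^ 2) * l ^ 2 := by ring
    linarith [t1, t2, t3]
  calc |lz * (ξ ^ 2 - ξ * s / 2) - ξ ^ 2 * ε - (b ^ 2 / 8) * lz ^ 2 + b ^ 2 / 16|
      ≤ lz * (b ^ 2 / 8) + b ^ 2 / 16 + (b ^ 2 / 8) * lz ^ 2 + b ^ 2 / 16 := habs
    _ ≤ (b ^ 2 / 8) * (M / Real.log 2 + M ^ 2 + 1 / (Real.log 2) ^ 2) * l ^ 2 := hfinal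
end
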